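/- arXiv:1810.09001 — 2 statements merged into one kernel-verified Lean document; each statement's English description precedes it below -/
import Mathlib

section
/- Let z₁, z₂ ∈ ℂ with z₁−z₂ ∉ ℤ+τℤ, and define f(x) = ρ(x−z₁,τ)ρ(x−z₂,τ) + ρ(z₁−z₂,τ)ρ(x−z₂,τ) − ρ(z₁−z₂,τ)ρ(x−z₁,τ) for x with x−z₁, x−z₂ ∉ ℤ+τℤ. Then f extends holomorphically across x=z₁ and x=z₂, and its limits satisfy lim_{x→z₁} f(x) = lim_{x→z₂} f(x) = η(z₁−z₂,τ). -/
noncomputable section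

open Complex

/-- `π` as a complex number. -/
def piC : ℂ := Real.pi

/-- The nome `q = e^{2πiτ}`. -/
def qpar (τ : ℂ) : ℂ := Complex.exp (2 * piC * Complex.I * τ)

/-- The normalized first Jacobi theta function
`θ(x,τ) = (sin(πx)/π) ∏_{j≥1} (1-q^j e^{2πix})(1-q^j e^{-2πix})(1-q^j)^{-2}`. -/
def Theta (τ x : ℂ) : ℂ :=
  (Complex.sin (piC * x) / piC) *
    ∏' j : ℕ,
      ((1 - qpar τ ^ (j + 1) * Complex.exp (2 * piC * Complex.I * x)) *
        (1 - qpar τ ^ (j + 1) * Complex.exp (-(2 * piC * Complex.I * x))) *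
        ((1 - qpar τ ^ (j + 1))⁻¹) ^ 2)

/-- `ρ(x,τ) = θ'(x,τ)/θ(x,τ)` (derivative in `x`). -/
def rho (τ x : ℂ) : ℂ := deriv (Theta τ) x / Theta τ x

/-- `σ(x,w,τ) = θ(x+w,τ)/(θ(x,τ)θ(w,τ))`. -/
def sigmaF (τ x w : ℂ) : ℂ := Theta τ (x + w) / (Theta τ x * Theta τ w)

/-- `φ(x,w,τ) = ∂_x σ(w,−x,τ)`. -/
def phiF (τ x w : ℂ) : ℂ := deriv (fun y => sigmaF τ w (-y)) x

/-- `η(x,τ) = ρ(x,τ)² + ρ'(x,τ)`. -/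
def etaF (τ x : ℂ) : ℂ := rho τ x ^ 2 + deriv (rho τ) x

/-- Membership in the lattice `ℤ + τℤ`. -/
def InLat (τ z : ℂ) : Prop := ∃ k l : ℤ, z = (k : ℂ) + (l : ℂ) * τ


-- ====== my development ======

/-- single factor of the theta product -/
def thFactor (τ x : ℂ) (j : ℕ) : ℂ :=
  (1 - qpar τ ^ (j + 1) * Complex.exp (2 * piC * Complex.I * x)) *
    (1 - qpar τ ^ (j + 1) * Complex.exp (-(2 * piC * Complex.I * x))) *
    ((1 - qpar τ ^ (j + 1))⁻¹) ^ 2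

def thProd (τ x : ℂ) : ℂ := ∏' j : ℕ, thFactor τ x j

lemma theta_eq (τ x : ℂ) : Theta τ x = (Complex.sin (piC * x) / piC) * thProd τ x := rfl

lemma piC_ne : piC ≠ 0 := by
  simp [piC, Complex.ofReal_ne_zero, Real.pi_ne_zero]

lemma q_norm_lt {τ : ℂ} (hτ : 0 < τ.im) : ‖qpar τ‖ < 1 := by
  have h1 : (2 * piC * Complex.I * τ).re = -(2 * Real.pi * τ.im) := by
    simp [piC, Complex.mul_re, Complex.mul_im]
  rw [qpar, Complex.norm_exp, h1]
  rw [Real.exp_lt_one_iff]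
  have := Real.pi_pos
  nlinarith

lemma q_pow_ne {τ : ℂ} (hτ : 0 < τ.im) (j : ℕ) : (1 : ℂ) - qpar τ ^ (j + 1) ≠ 0 := by
  intro hc
  have h1 : qpar τ ^ (j + 1) = 1 := by linear_combination -hc
  have h2 : ‖qpar τ ^ (j + 1)‖ < 1 := by
    rw [norm_pow]
    exact pow_lt_one₀ (norm_nonneg _) (q_norm_lt hτ) (Nat.succ_ne_zero j)
  rw [h1, norm_one] at h2
  exact lt_irrefl _ h2

lemma norm_exp_2pi_le {x : ℂ} {R : ℝ} (hx : ‖x‖ ≤ R) :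
    ‖Complex.exp (2 * piC * Complex.I * x)‖ ≤ Real.exp (2 * Real.pi * R) := by
  have h1 : (2 * piC * Complex.I * x).re = -(2 * Real.pi * x.im) := by
    simp [piC, Complex.mul_re, Complex.mul_im]
  rw [Complex.norm_exp, h1]
  apply Real.exp_le_exp.2
  have h2 : |x.im| ≤ R := le_trans (Complex.abs_im_le_norm x) hx
  have := Real.pi_pos
  have h3 : -R ≤ x.im := by cases abs_le.1 h2; assumption
  nlinarith

lemma norm_exp_neg_2pi_le {x : ℂ} {R : ℝ} (hx : ‖x‖ ≤ R) :
    ‖Complex.exp (-(2 * piC * Complex.I * x))‖ ≤ Real.exp (2 * Real.pi * R) := by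
  have h0 : -(2 * piC * Complex.I * x) = 2 * piC * Complex.I * (-x) := by ring
  rw [h0]
  exact norm_exp_2pi_le (by simpa using hx)


open Filter in
lemma thProd_rep {τ : ℂ} (hτ : 0 < τ.im) {R : ℝ} (hR : 0 < R) :
    ∃ N : ℕ, ∃ LL : ℂ → ℂ, DifferentiableOn ℂ LL (Metric.ball 0 R) ∧
      ∀ x ∈ Metric.ball (0:ℂ) R, thProd τ x
        = (∏ j ∈ Finset.range N, thFactor τ x j) * Complex.exp (LL x) := by
  have hq : ‖qpar τ‖ < 1 := q_norm_lt hτ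
  have hq0 : (0:ℝ) ≤ ‖qpar τ‖ := norm_nonneg _
  set q := qpar τ with hqdef
  set C := Real.exp (2 * Real.pi * R) with hCdef
  have hC1 : (1:ℝ) ≤ C := Real.one_le_exp (by positivity)
  have htend : Filter.Tendsto (fun n : ℕ => ‖q‖ ^ (n+1) * C) Filter.atTop (nhds 0) := by
    have h1 := tendsto_pow_atTop_nhds_zero_of_lt_one hq0 hq
    have h2 := (h1.comp (Filter.tendsto_add_atTop_nat 1)).mul_const C
    simpa using h2
  obtain ⟨N, hN⟩ := (htend.eventually (eventually_le_nhds (by norm_num : (0:ℝ) < 1/2))).exists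
  have hkey : ∀ j : ℕ, ‖q‖ ^ (j + N + 1) * C ≤ 1/2 * ‖q‖ ^ j := by
    intro j
    have : ‖q‖ ^ (j + N + 1) = ‖q‖ ^ j * ‖q‖ ^ (N + 1) := by ring
    rw [this, mul_assoc]
    calc ‖q‖ ^ j * (‖q‖ ^ (N+1) * C) ≤ ‖q‖ ^ j * (1/2) := by
          apply mul_le_mul_of_nonneg_left hN (by positivity)
      _ = 1/2 * ‖q‖ ^ j := by ring
  -- basic smallness estimates on the ball
  have hsmall : ∀ j : ℕ, ∀ x ∈ Metric.ball (0:ℂ) R,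
      ‖q ^ (j + N + 1) * Complex.exp (2 * piC * Complex.I * x)‖ ≤ 1/2 * ‖q‖ ^ j ∧
      ‖q ^ (j + N + 1) * Complex.exp (-(2 * piC * Complex.I * x))‖ ≤ 1/2 * ‖q‖ ^ j ∧
      ‖q ^ (j + N + 1)‖ ≤ 1/2 * ‖q‖ ^ j := by
    intro j x hx
    have hxR : ‖x‖ ≤ R := by
      have := Metric.mem_ball.1 hx
      simp only [dist_zero_right] at this
      exact this.le
    have h1 := norm_exp_2pi_le (x := x) (R := R) hxR
    have h2 := norm_exp_neg_2pi_le (x := x) (R := R) hxR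
    have hqn : ‖q ^ (j + N + 1)‖ = ‖q‖ ^ (j + N + 1) := norm_pow _ _
    have hb : (0:ℝ) ≤ ‖q‖ ^ (j + N + 1) := by positivity
    refine ⟨?_, ?_, ?_⟩
    · rw [norm_mul, hqn]
      calc ‖q‖ ^ (j+N+1) * ‖Complex.exp (2 * piC * Complex.I * x)‖
          ≤ ‖q‖ ^ (j+N+1) * C := mul_le_mul_of_nonneg_left h1 hb
        _ ≤ 1/2 * ‖q‖ ^ j := hkey j
    · rw [norm_mul, hqn]
      calc ‖q‖ ^ (j+N+1) * ‖Complex.exp (-(2 * piC * Complex.I * x))‖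
          ≤ ‖q‖ ^ (j+N+1) * C := mul_le_mul_of_nonneg_left h2 hb
        _ ≤ 1/2 * ‖q‖ ^ j := hkey j
    · rw [hqn]
      calc ‖q‖ ^ (j+N+1) = ‖q‖ ^ (j+N+1) * 1 := by ring
        _ ≤ ‖q‖ ^ (j+N+1) * C := mul_le_mul_of_nonneg_left hC1 hb
        _ ≤ 1/2 * ‖q‖ ^ j := hkey j
  -- the log terms
  set gj : ℕ → ℂ → ℂ := fun j x =>
    Complex.log (1 - q ^ (j + N + 1) * Complex.exp (2 * piC * Complex.I * x)) +
      Complex.log (1 - q ^ (j + N + 1) * Complex.exp (-(2 * piC * Complex.I * x))) -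
      2 * Complex.log (1 - q ^ (j + N + 1)) with hgj
  have hlogbound : ∀ w : ℂ, ‖w‖ ≤ 1/2 → ‖Complex.log (1 - w)‖ ≤ 3/2 * ‖w‖ := by
    intro w hw
    rw [sub_eq_add_neg]
    simpa using Complex.norm_log_one_add_half_le_self (z := -w) (by simpa using hw)
  have hbound : ∀ j : ℕ, ∀ x ∈ Metric.ball (0:ℂ) R, ‖gj j x‖ ≤ 3 * ‖q‖ ^ j := by
    intro j x hx
    obtain ⟨s1, s2, s3⟩ := hsmall j x hx
    have hhalf : (1:ℝ)/2 * ‖q‖ ^ j ≤ 1/2 := by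
      have : ‖q‖ ^ j ≤ 1 := pow_le_one₀ hq0 hq.le
      nlinarith
    have e1 := hlogbound _ (le_trans s1 hhalf)
    have e2 := hlogbound _ (le_trans s2 hhalf)
    have e3 := hlogbound _ (le_trans s3 hhalf)
    have b1 : ‖Complex.log (1 - q ^ (j + N + 1) * Complex.exp (2 * piC * Complex.I * x))‖
        ≤ 3/2 * (1/2 * ‖q‖ ^ j) :=
      e1.trans (mul_le_mul_of_nonneg_left s1 (by norm_num))
    have b2 : ‖Complex.log (1 - q ^ (j + N + 1) * Complex.exp (-(2 * piC * Complex.I * x)))‖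
        ≤ 3/2 * (1/2 * ‖q‖ ^ j) :=
      e2.trans (mul_le_mul_of_nonneg_left s2 (by norm_num))
    have b3 : ‖Complex.log (1 - q ^ (j + N + 1))‖ ≤ 3/2 * (1/2 * ‖q‖ ^ j) :=
      e3.trans (mul_le_mul_of_nonneg_left s3 (by norm_num))
    rw [hgj]
    have t1 := norm_sub_le
      (Complex.log (1 - q ^ (j + N + 1) * Complex.exp (2 * piC * Complex.I * x)) +
        Complex.log (1 - q ^ (j + N + 1) * Complex.exp (-(2 * piC * Complex.I * x))))
      (2 * Complex.log (1 - q ^ (j + N + 1)))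
    have t2 := norm_add_le
      (Complex.log (1 - q ^ (j + N + 1) * Complex.exp (2 * piC * Complex.I * x)))
      (Complex.log (1 - q ^ (j + N + 1) * Complex.exp (-(2 * piC * Complex.I * x))))
    have t3 : ‖(2 : ℂ) * Complex.log (1 - q ^ (j + N + 1))‖
        = 2 * ‖Complex.log (1 - q ^ (j + N + 1))‖ := by
      rw [norm_mul]; norm_num
    rw [t3] at t1
    simp only [] at t1 t2 ⊢
    linarith
  have hgeo : Summable (fun j : ℕ => 3 * ‖q‖ ^ j) :=
    (summable_geometric_of_lt_one hq0 hq).mul_left 3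
  have hmem : ∀ w : ℂ, ‖w‖ ≤ 1/2 → (1 - w) ∈ Complex.slitPlane := by
    intro w hw
    rw [Complex.mem_slitPlane_iff]
    left
    have h1 : |w.re| ≤ ‖w‖ := Complex.abs_re_le_norm w
    have h2 := (abs_le.1 (h1.trans hw)).2
    simp only [Complex.sub_re, Complex.one_re]
    linarith
  have hne : ∀ w : ℂ, ‖w‖ ≤ 1/2 → (1 : ℂ) - w ≠ 0 := by
    intro w hw hc
    have hw1 : w = 1 := by linear_combination -hc
    rw [hw1] at hw
    norm_num at hw
  refine ⟨N, fun x => ∑' j, gj j x, ?_, ?_⟩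
  · apply differentiableOn_tsum_of_summable_norm hgeo ?_ Metric.isOpen_ball
      (fun j x hx => hbound j x hx)
    intro j
    intro x hx
    apply DifferentiableAt.differentiableWithinAt
    obtain ⟨s1, s2, s3⟩ := hsmall j x hx
    have hhalf : (1:ℝ)/2 * ‖q‖ ^ j ≤ 1/2 := by
      have : ‖q‖ ^ j ≤ 1 := pow_le_one₀ hq0 hq.le
      nlinarith
    have d1 : DifferentiableAt ℂ
        (fun y : ℂ => 1 - q ^ (j + N + 1) * Complex.exp (2 * piC * Complex.I * y)) x :=
      ((differentiable_const (1:ℂ)).sub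
        (((differentiable_id.const_mul (2 * piC * Complex.I)).cexp).const_mul _)).differentiableAt
    have d2 : DifferentiableAt ℂ
        (fun y : ℂ => 1 - q ^ (j + N + 1) * Complex.exp (-(2 * piC * Complex.I * y))) x :=
      ((differentiable_const (1:ℂ)).sub
        ((((differentiable_id.const_mul (2 * piC * Complex.I)).neg).cexp).const_mul _)).differentiableAt
    exact ((d1.clog (hmem _ (s1.trans hhalf))).add (d2.clog (hmem _ (s2.trans hhalf)))).sub (differentiableAt_const _)
  · intro x hx
    have hsum : Summable (fun j => gj j x) :=
      Summable.of_norm_bounded hgeo (fun j => hbound j x hx)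
    have hprod : HasProd (fun j => Complex.exp (gj j x)) (Complex.exp (∑' j, gj j x)) :=
      hsum.hasSum.cexp
    have hfac : ∀ j, Complex.exp (gj j x) = thFactor τ x (j + N) := by
      intro j
      obtain ⟨s1, s2, s3⟩ := hsmall j x hx
      have hhalf : (1:ℝ)/2 * ‖q‖ ^ j ≤ 1/2 := by
        have : ‖q‖ ^ j ≤ 1 := pow_le_one₀ hq0 hq.le
        nlinarith
      have n1 := hne _ (s1.trans hhalf)
      have n2 := hne _ (s2.trans hhalf)
      have n3 := hne _ (s3.trans hhalf)
      have e2c : Complex.exp (2 * Complex.log (1 - q ^ (j + N + 1)))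
          = (1 - q ^ (j + N + 1)) ^ 2 := by
        rw [two_mul, Complex.exp_add, Complex.exp_log n3, sq]
      rw [hgj]
      simp only []
      rw [Complex.exp_sub, Complex.exp_add, Complex.exp_log n1, Complex.exp_log n2, e2c]
      show _ = _ * _ * ((1 - q ^ (j + N + 1))⁻¹) ^ 2
      rw [div_eq_mul_inv, ← inv_pow]
    have hfacs : (fun j => Complex.exp (gj j x)) = fun j => thFactor τ x (j + N) := funext hfac
    rw [hfacs] at hprod
    have hsplit := Multipliable.prod_mul_tprod_nat_mul' (f := fun j => thFactor τ x j) (k := N) ⟨_, hprod⟩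
    rw [show thProd τ x = ∏' j, thFactor τ x j from rfl, ← hsplit, hprod.tprod_eq]


lemma InLat.neg' {τ z : ℂ} (h : InLat τ z) : InLat τ (-z) := by
  obtain ⟨k, l, rfl⟩ := h
  exact ⟨-k, -l, by push_cast; ring⟩

lemma not_inlat_neg {τ z : ℂ} (h : ¬ InLat τ z) : ¬ InLat τ (-z) := by
  intro hc
  exact h (by simpa using hc.neg')

lemma factor_one_ne {τ : ℂ} (hτ : 0 < τ.im) {x : ℂ} (hx : ¬ InLat τ x) (j : ℕ) :
    1 - qpar τ ^ (j + 1) * Complex.exp (2 * piC * Complex.I * x) ≠ 0 := by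
  intro hc
  have hq1 : qpar τ ^ (j + 1) * Complex.exp (2 * piC * Complex.I * x) = 1 := by
    linear_combination -hc
  have h1 : Complex.exp ((↑(j+1) : ℂ) * (2 * piC * Complex.I * τ) + 2 * piC * Complex.I * x)
      = 1 := by
    rw [Complex.exp_add, Complex.exp_nat_mul]
    exact hq1
  rw [Complex.exp_eq_one_iff] at h1
  obtain ⟨n, hn⟩ := h1
  apply hx
  refine ⟨n, -(j + 1 : ℤ), ?_⟩
  have c_ne : (2 * (Real.pi : ℂ) * Complex.I) ≠ 0 :=
    mul_ne_zero (mul_ne_zero two_ne_zero (Complex.ofReal_ne_zero.2 Real.pi_ne_zero))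
      Complex.I_ne_zero
  simp only [piC] at hn
  have hx' : x = (n : ℂ) - ((j : ℂ) + 1) * τ := by
    apply mul_left_cancel₀ c_ne
    push_cast at hn ⊢
    linear_combination hn
  rw [hx']
  push_cast
  ring

lemma thFactor_ne_zero {τ : ℂ} (hτ : 0 < τ.im) {x : ℂ} (hx : ¬ InLat τ x) (j : ℕ) :
    thFactor τ x j ≠ 0 := by
  apply mul_ne_zero (mul_ne_zero ?_ ?_) ?_
  · exact factor_one_ne hτ hx j
  · have := factor_one_ne hτ (not_inlat_neg hx) j
    rw [show 2 * piC * Complex.I * (-x) = -(2 * piC * Complex.I * x) from by ring] at this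
    exact this
  · exact pow_ne_zero _ (inv_ne_zero (q_pow_ne hτ j))

lemma head_differentiable (τ : ℂ) (N : ℕ) :
    Differentiable ℂ (fun x => ∏ j ∈ Finset.range N, thFactor τ x j) := by
  apply Differentiable.fun_finsetProd
  intro j _
  have d1 : Differentiable ℂ
      (fun y : ℂ => 1 - qpar τ ^ (j + 1) * Complex.exp (2 * piC * Complex.I * y)) :=
    (differentiable_const (1:ℂ)).sub
      (((differentiable_id.const_mul (2 * piC * Complex.I)).cexp).const_mul _)
  have d2 : Differentiable ℂ
      (fun y : ℂ => 1 - qpar τ ^ (j + 1) * Complex.exp (-(2 * piC * Complex.I * y))) :=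
    (differentiable_const (1:ℂ)).sub
      ((((differentiable_id.const_mul (2 * piC * Complex.I)).neg).cexp).const_mul _)
  exact (d1.mul d2).mul (differentiable_const _)

lemma thProd_analyticAt {τ : ℂ} (hτ : 0 < τ.im) (x₀ : ℂ) : AnalyticAt ℂ (thProd τ) x₀ := by
  obtain ⟨N, LL, hLL, hrep⟩ := thProd_rep hτ (R := ‖x₀‖ + 1) (by positivity)
  have hdiff : DifferentiableOn ℂ (thProd τ) (Metric.ball 0 (‖x₀‖ + 1)) := by
    apply DifferentiableOn.congr (f := fun x =>
      (∏ j ∈ Finset.range N, thFactor τ x j) * Complex.exp (LL x))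
    · exact ((head_differentiable τ N).differentiableOn).mul (hLL.cexp)
    · exact hrep
  exact hdiff.analyticAt (Metric.isOpen_ball.mem_nhds (by simp [Metric.mem_ball]))

lemma thProd_ne_zero {τ : ℂ} (hτ : 0 < τ.im) {x : ℂ} (hx : ¬ InLat τ x) : thProd τ x ≠ 0 := by
  obtain ⟨N, LL, hLL, hrep⟩ := thProd_rep hτ (R := ‖x‖ + 1) (by positivity)
  rw [hrep x (by simp [Metric.mem_ball])]
  exact mul_ne_zero (Finset.prod_ne_zero_iff.2 fun j _ => thFactor_ne_zero hτ hx j)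
    (Complex.exp_ne_zero _)

lemma thProd_zero {τ : ℂ} (hτ : 0 < τ.im) : thProd τ 0 = 1 := by
  have h1 : ∀ j : ℕ, thFactor τ 0 j = 1 := by
    intro j
    have hne := q_pow_ne hτ j
    unfold thFactor
    rw [mul_zero, neg_zero, Complex.exp_zero, mul_one]
    field_simp
  rw [thProd, tprod_congr h1, tprod_one]

lemma thFactor_neg (τ x : ℂ) (j : ℕ) : thFactor τ (-x) j = thFactor τ x j := by
  unfold thFactor
  rw [show 2 * piC * Complex.I * (-x) = -(2 * piC * Complex.I * x) from by ring]
  rw [neg_neg]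
  ring

lemma thProd_neg (τ x : ℂ) : thProd τ (-x) = thProd τ x :=
  tprod_congr fun j => thFactor_neg τ x j

lemma sinpart_differentiable : Differentiable ℂ (fun x : ℂ => Complex.sin (piC * x) / piC) :=
  (Complex.differentiable_sin.comp (differentiable_id.const_mul piC)).div_const piC

lemma theta_analytic {τ : ℂ} (hτ : 0 < τ.im) (x₀ : ℂ) : AnalyticAt ℂ (Theta τ) x₀ := by
  have : Theta τ = fun x => (Complex.sin (piC * x) / piC) * thProd τ x :=
    funext fun x => theta_eq τ x
  rw [this]
  exact ((sinpart_differentiable.analyticAt x₀)).mul (thProd_analyticAt hτ x₀)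

lemma theta_ne_zero {τ : ℂ} (hτ : 0 < τ.im) {x : ℂ} (hx : ¬ InLat τ x) : Theta τ x ≠ 0 := by
  rw [theta_eq]
  apply mul_ne_zero (div_ne_zero ?_ piC_ne) (thProd_ne_zero hτ hx)
  intro hc
  rw [Complex.sin_eq_zero_iff] at hc
  obtain ⟨k, hk⟩ := hc
  apply hx
  refine ⟨k, 0, ?_⟩
  have : (piC : ℂ) * x = piC * k := by rw [hk, piC]; ring
  have := mul_left_cancel₀ piC_ne this
  rw [this]
  push_cast
  ring

lemma theta_zero (τ : ℂ) : Theta τ 0 = 0 := by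
  rw [theta_eq, mul_zero, Complex.sin_zero, zero_div, zero_mul]

lemma theta_neg (τ x : ℂ) : Theta τ (-x) = -Theta τ x := by
  rw [theta_eq, theta_eq, thProd_neg, mul_neg, Complex.sin_neg, neg_div, neg_mul]

lemma theta_deriv_zero {τ : ℂ} (hτ : 0 < τ.im) : deriv (Theta τ) 0 = 1 := by
  have hP := (thProd_analyticAt hτ 0).differentiableAt.hasDerivAt
  have hs0 : HasDerivAt (fun x : ℂ => piC * x) piC 0 := by
    simpa using (hasDerivAt_id (0:ℂ)).const_mul piC
  have hs1 : HasDerivAt (fun x : ℂ => Complex.sin (piC * x)) (Complex.cos (piC * 0) * piC) 0 :=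
    (Complex.hasDerivAt_sin (piC * 0)).comp 0 hs0
  have hs2 : HasDerivAt (fun x : ℂ => Complex.sin (piC * x) / piC) 1 0 := by
    have := hs1.div_const piC
    simpa [Complex.cos_zero, piC_ne] using this
  have hmul := hs2.mul hP
  have hTheta : Theta τ = fun x => (Complex.sin (piC * x) / piC) * thProd τ x :=
    funext fun x => theta_eq τ x
  rw [hTheta]
  rw [show (fun x => (Complex.sin (piC * x) / piC) * thProd τ x) = (fun x : ℂ => Complex.sin (piC * x) / piC) * thProd τ from rfl, hmul.deriv]
  simp [thProd_zero hτ]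


lemma analyticAt_deriv {f : ℂ → ℂ} {x : ℂ} (h : AnalyticAt ℂ f x) :
    AnalyticAt ℂ (deriv f) x := by
  have h1 := h.fderiv
  have h2 : AnalyticAt ℂ (fun y => fderiv ℂ f y 1) x :=
    ((ContinuousLinearMap.apply ℂ ℂ (1:ℂ)).analyticAt _).comp h1
  have h3 : deriv f = fun y => fderiv ℂ f y 1 := funext fun y => rfl
  rw [h3]; exact h2

lemma rho_analyticAt {τ : ℂ} (hτ : 0 < τ.im) {x : ℂ} (hx : ¬ InLat τ x) :
    AnalyticAt ℂ (rho τ) x := by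
  have : rho τ = fun y => deriv (Theta τ) y / Theta τ y := rfl
  rw [this]
  exact (analyticAt_deriv (theta_analytic hτ x)).div (theta_analytic hτ x) (theta_ne_zero hτ hx)

lemma deriv_theta_even (τ x : ℂ) : deriv (Theta τ) (-x) = deriv (Theta τ) x := by
  have h1 : Theta τ = fun y => -(Theta τ (-y)) := funext fun y => by rw [theta_neg, neg_neg]
  conv_rhs => rw [h1]
  rw [deriv.fun_neg, deriv_comp_neg, neg_neg]

lemma rho_neg (τ x : ℂ) : rho τ (-x) = -rho τ x := by
  show deriv (Theta τ) (-x) / Theta τ (-x) = -(deriv (Theta τ) x / Theta τ x)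
  rw [deriv_theta_even, theta_neg, div_neg]

lemma deriv_rho_even (τ x : ℂ) : deriv (rho τ) (-x) = deriv (rho τ) x := by
  have h1 : rho τ = fun y => -(rho τ (-y)) := funext fun y => by rw [rho_neg, neg_neg]
  conv_rhs => rw [h1]
  rw [deriv.fun_neg, deriv_comp_neg, neg_neg]

/-- `θ(x)/x` extended by `θ'(0)` at `0`. -/
def hAux (τ : ℂ) : ℂ → ℂ := dslope (Theta τ) 0

lemma theta_eq_mul_hAux (τ x : ℂ) : Theta τ x = x * hAux τ x := by
  rcases eq_or_ne x 0 with rfl | hx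
  · simp [theta_zero]
  · rw [hAux, dslope_of_ne _ hx, slope_def_field, theta_zero, sub_zero, sub_zero]
    field_simp

lemma hAux_zero {τ : ℂ} (hτ : 0 < τ.im) : hAux τ 0 = 1 := by
  rw [hAux, dslope_same]; exact theta_deriv_zero hτ

lemma hAux_analytic {τ : ℂ} (hτ : 0 < τ.im) : AnalyticAt ℂ (hAux τ) 0 := by
  obtain ⟨p, hp⟩ := theta_analytic hτ 0
  exact ⟨p.fslope, hp.has_fpower_series_dslope_fslope⟩

lemma hAux_neg (τ x : ℂ) : hAux τ (-x) = hAux τ x := by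
  rcases eq_or_ne x 0 with rfl | hx
  · rw [neg_zero]
  · rw [hAux, dslope_of_ne _ (neg_ne_zero.2 hx), dslope_of_ne _ hx, slope_def_field,
      slope_def_field, theta_zero, theta_neg, sub_zero, sub_zero, sub_zero, sub_zero,
      neg_div_neg_eq]

lemma deriv_hAux_zero (τ : ℂ) : deriv (hAux τ) 0 = 0 := by
  have h1 : hAux τ = fun y => hAux τ (-y) := funext fun y => (hAux_neg τ y).symm
  have h2 : deriv (hAux τ) 0 = -deriv (hAux τ) 0 := by
    conv_lhs => rw [h1]
    rw [deriv_comp_neg, neg_zero]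
  linear_combination h2 / 2

/-- `ρ(y) - 1/y` near `0`. -/
def gAux (τ : ℂ) : ℂ → ℂ := fun y => deriv (hAux τ) y / hAux τ y

lemma gAux_analytic {τ : ℂ} (hτ : 0 < τ.im) : AnalyticAt ℂ (gAux τ) 0 :=
  (analyticAt_deriv (hAux_analytic hτ)).div (hAux_analytic hτ)
    (by rw [hAux_zero hτ]; exact one_ne_zero)

lemma gAux_zero (τ : ℂ) : gAux τ 0 = 0 := by
  show deriv (hAux τ) 0 / hAux τ 0 = 0
  rw [deriv_hAux_zero, zero_div]

lemma rho_decomp {τ : ℂ} (hτ : 0 < τ.im) :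
    ∀ᶠ y in nhdsWithin 0 {(0:ℂ)}ᶜ, rho τ y = 1 / y + gAux τ y := by
  have h1 : ∀ᶠ y in nhds (0:ℂ), AnalyticAt ℂ (hAux τ) y :=
    (hAux_analytic hτ).eventually_analyticAt
  have h2 : ∀ᶠ y in nhds (0:ℂ), hAux τ y ≠ 0 :=
    (hAux_analytic hτ).continuousAt.eventually_ne
      (by rw [hAux_zero hτ]; exact one_ne_zero)
  filter_upwards [h1.filter_mono nhdsWithin_le_nhds, h2.filter_mono nhdsWithin_le_nhds,
    eventually_mem_nhdsWithin] with y hy1 hy2 hy3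
  have hy0 : y ≠ 0 := Set.mem_compl_singleton_iff.1 hy3
  have hd : HasDerivAt (fun t : ℂ => t * hAux τ t)
      (1 * hAux τ y + y * deriv (hAux τ) y) y :=
    (hasDerivAt_id y).mul hy1.differentiableAt.hasDerivAt
  have hTh : Theta τ = fun t => t * hAux τ t := funext (theta_eq_mul_hAux τ)
  have hderiv : deriv (Theta τ) y = hAux τ y + y * deriv (hAux τ) y := by
    rw [hTh, hd.deriv]; ring
  unfold rho gAux
  rw [hderiv, theta_eq_mul_hAux]
  field_simp


lemma analyticAt_shift {g : ℂ → ℂ} {a c : ℂ} (hg : AnalyticAt ℂ g (a - c)) :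
    AnalyticAt ℂ (fun t => g (t - c)) a := by
  have hin : AnalyticAt ℂ (fun t : ℂ => t - c) a := by
    exact AnalyticAt.sub (analyticAt_id (𝕜 := ℂ) (z := a)) analyticAt_const
  exact AnalyticAt.comp (f := fun t : ℂ => t - c) hg hin


/-- `f(x) = ρ(x−z₁)ρ(x−z₂) + ρ(z₁−z₂)ρ(x−z₂) − ρ(z₁−z₂)ρ(x−z₁)`
extends holomorphically across `x = z₁` and `x = z₂`, with both limits equal to
`η(z₁−z₂,τ)`. -/
theorem rho_combination_extends (τ : ℂ) (hτ : 0 < τ.im) (z₁ z₂ : ℂ)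
    (h : ¬ InLat τ (z₁ - z₂)) :
    let f : ℂ → ℂ := fun x =>
      rho τ (x - z₁) * rho τ (x - z₂) + rho τ (z₁ - z₂) * rho τ (x - z₂)
        - rho τ (z₁ - z₂) * rho τ (x - z₁)
    (∃ F : ℂ → ℂ, AnalyticAt ℂ F z₁ ∧ F =ᶠ[nhdsWithin z₁ {z₁}ᶜ] f ∧
        F z₁ = etaF τ (z₁ - z₂)) ∧
    (∃ G : ℂ → ℂ, AnalyticAt ℂ G z₂ ∧ G =ᶠ[nhdsWithin z₂ {z₂}ᶜ] f ∧
        G z₂ = etaF τ (z₁ - z₂)) ∧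
    Filter.Tendsto f (nhdsWithin z₁ {z₁}ᶜ) (nhds (etaF τ (z₁ - z₂))) ∧
    Filter.Tendsto f (nhdsWithin z₂ {z₂}ᶜ) (nhds (etaF τ (z₁ - z₂))) := by

  intro f
  have hf : ∀ x, f x = rho τ (x - z₁) * rho τ (x - z₂) + rho τ (z₁ - z₂) * rho τ (x - z₂)
      - rho τ (z₁ - z₂) * rho τ (x - z₁) := fun x => rfl
  have hneg : z₂ - z₁ = -(z₁ - z₂) := by ring
  have h2 : ¬ InLat τ (z₂ - z₁) := by rw [hneg]; exact not_inlat_neg h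
  -- analyticity of shifted rho's
  have hr2 : AnalyticAt ℂ (fun t => rho τ (t - z₂)) z₁ :=
    analyticAt_shift (rho_analyticAt hτ h)
  have hr1 : AnalyticAt ℂ (fun t => rho τ (t - z₁)) z₂ :=
    analyticAt_shift (rho_analyticAt hτ h2)
  have hodd : rho τ (z₂ - z₁) = -rho τ (z₁ - z₂) := by rw [hneg, rho_neg]
  have hd2 : deriv (fun t => rho τ (t - z₂)) z₁ = deriv (rho τ) (z₁ - z₂) :=
    deriv_comp_sub_const _ _ _
  have hd1 : deriv (fun t => rho τ (t - z₁)) z₂ = deriv (rho τ) (z₁ - z₂) := by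
    rw [deriv_comp_sub_const, hneg, deriv_rho_even]
  -- pullback of the rho decomposition maps
  have hmap : ∀ z : ℂ, Filter.Tendsto (fun x => x - z) (nhdsWithin z {z}ᶜ)
      (nhdsWithin 0 {(0:ℂ)}ᶜ) := by
    intro z
    rw [tendsto_nhdsWithin_iff]
    constructor
    · have h1 : Filter.Tendsto (fun x : ℂ => x - z) (nhds z) (nhds (z - z)) :=
        (continuous_id.sub continuous_const).tendsto z
      rw [sub_self] at h1
      exact h1.mono_left nhdsWithin_le_nhds
    · filter_upwards [eventually_mem_nhdsWithin] with x hx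
      exact Set.mem_compl_singleton_iff.2
        (sub_ne_zero.2 (Set.mem_compl_singleton_iff.1 hx))
  have hdec1 := (hmap z₁).eventually (rho_decomp hτ)
  have hdec2 := (hmap z₂).eventually (rho_decomp hτ)
  -- the extension at z₁
  set F : ℂ → ℂ := fun x => dslope (fun t => rho τ (t - z₂)) z₁ x
      + gAux τ (x - z₁) * (rho τ (x - z₂) - rho τ (z₁ - z₂))
      + rho τ (z₁ - z₂) * rho τ (x - z₂) with hFdef
  have hg1 : AnalyticAt ℂ (fun x => gAux τ (x - z₁)) z₁ := by
    have h0 : AnalyticAt ℂ (gAux τ) (z₁ - z₁) := by rw [sub_self]; exact gAux_analytic hτ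
    exact analyticAt_shift h0
  have hds1 : AnalyticAt ℂ (dslope (fun t => rho τ (t - z₂)) z₁) z₁ := by
    obtain ⟨p, hp⟩ := hr2
    exact ⟨p.fslope, hp.has_fpower_series_dslope_fslope⟩
  have hFan : AnalyticAt ℂ F z₁ :=
    (hds1.add (hg1.mul (hr2.sub analyticAt_const))).add (analyticAt_const.mul hr2)
  have hFeq : F =ᶠ[nhdsWithin z₁ {z₁}ᶜ] f := by
    filter_upwards [hdec1, eventually_mem_nhdsWithin] with x hx1 hx2
    have hxne : x ≠ z₁ := Set.mem_compl_singleton_iff.1 hx2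
    have hu : x - z₁ ≠ 0 := sub_ne_zero.2 hxne
    have hds : dslope (fun t => rho τ (t - z₂)) z₁ x
        = (rho τ (x - z₂) - rho τ (z₁ - z₂)) / (x - z₁) := by
      rw [dslope_of_ne _ hxne, slope_def_field]
    rw [hf x, hFdef]
    simp only []
    rw [hds, hx1]
    field_simp
    ring
  have hFval : F z₁ = etaF τ (z₁ - z₂) := by
    rw [hFdef]
    simp only []
    rw [dslope_same, hd2, sub_self, gAux_zero, etaF]
    ring
  -- the extension at z₂
  set G : ℂ → ℂ := fun x => dslope (fun t => rho τ (t - z₁) + rho τ (z₁ - z₂)) z₂ x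
      + gAux τ (x - z₂) * (rho τ (x - z₁) + rho τ (z₁ - z₂))
      - rho τ (z₁ - z₂) * rho τ (x - z₁) with hGdef
  have hg2 : AnalyticAt ℂ (fun x => gAux τ (x - z₂)) z₂ := by
    have h0 : AnalyticAt ℂ (gAux τ) (z₂ - z₂) := by rw [sub_self]; exact gAux_analytic hτ
    exact analyticAt_shift h0
  have hds2 : AnalyticAt ℂ (dslope (fun t => rho τ (t - z₁) + rho τ (z₁ - z₂)) z₂) z₂ := by
    obtain ⟨p, hp⟩ := hr1.add analyticAt_const
    exact ⟨p.fslope, hp.has_fpower_series_dslope_fslope⟩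
  have hGan : AnalyticAt ℂ G z₂ :=
    (hds2.add (hg2.mul (hr1.add analyticAt_const))).sub (analyticAt_const.mul hr1)
  have hGeq : G =ᶠ[nhdsWithin z₂ {z₂}ᶜ] f := by
    filter_upwards [hdec2, eventually_mem_nhdsWithin] with x hx1 hx2
    have hxne : x ≠ z₂ := Set.mem_compl_singleton_iff.1 hx2
    have hu : x - z₂ ≠ 0 := sub_ne_zero.2 hxne
    have hds : dslope (fun t => rho τ (t - z₁) + rho τ (z₁ - z₂)) z₂ x
        = (rho τ (x - z₁) + rho τ (z₁ - z₂)) / (x - z₂) := by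
      rw [dslope_of_ne _ hxne, slope_def_field, hodd]
      ring_nf
    rw [hf x, hGdef]
    simp only []
    rw [hds, hx1]
    field_simp
  have hGval : G z₂ = etaF τ (z₁ - z₂) := by
    rw [hGdef]
    simp only []
    rw [dslope_same, deriv_add_const, hd1, sub_self, gAux_zero, hodd, etaF]
    ring
  have ht1 : Filter.Tendsto f (nhdsWithin z₁ {z₁}ᶜ) (nhds (etaF τ (z₁ - z₂))) := by
    have hc : Filter.Tendsto F (nhdsWithin z₁ {z₁}ᶜ) (nhds (F z₁)) :=
      hFan.continuousAt.continuousWithinAt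
    rw [hFval] at hc
    exact hc.congr' hFeq
  have ht2 : Filter.Tendsto f (nhdsWithin z₂ {z₂}ᶜ) (nhds (etaF τ (z₁ - z₂))) := by
    have hc : Filter.Tendsto G (nhdsWithin z₂ {z₂}ᶜ) (nhds (G z₂)) :=
      hGan.continuousAt.continuousWithinAt
    rw [hGval] at hc
    exact hc.congr' hGeq
  exact ⟨⟨F, hFan, hFeq, hFval⟩, ⟨G, hGan, hGeq, hGval⟩, ht1, ht2⟩

end
end

section
/- Fix m ∈ ℤ_{>0} and A, B ∈ ℂ^×. The set T_{m,A,B} of entire functions f : ℂ → ℂ satisfying f(x+1) = A(−1)^m f(x) and f(x+τ) = B(−1)^m e^{−πimτ−2πimx} f(x) for all x ∈ ℂ is a complex vector space of dimension exactly m. -/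
noncomputable section

open Complex

/-- `f` is a theta-polynomial of degree `m` with multipliers `(A, B)`:
`f(x+1) = A(−1)^m f(x)` and `f(x+τ) = B(−1)^m e^{−πimτ−2πimx} f(x)`. -/
def IsThetaPoly (τ : ℂ) (m : ℕ) (A B : ℂ) (f : ℂ → ℂ) : Prop :=
  (∀ x : ℂ, f (x + 1) = A * (-1) ^ m * f x) ∧
  (∀ x : ℂ, f (x + τ)
      = B * (-1) ^ m *
          Complex.exp (-(piC * Complex.I * m * τ) - 2 * piC * Complex.I * m * x) * f x)

/-- The space `T_{m,A,B}` of entire theta-polynomials of degree `m` with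
multipliers `(A,B)`, as a subspace of `ℂ → ℂ`. -/
def TSpace (τ : ℂ) (m : ℕ) (A B : ℂ) : Submodule ℂ (ℂ → ℂ) where
  carrier := {f | Differentiable ℂ f ∧ IsThetaPoly τ m A B f}
  add_mem' := by
    rintro f g ⟨hf, hf1, hf2⟩ ⟨hg, hg1, hg2⟩
    refine ⟨hf.add hg, fun x => ?_, fun x => ?_⟩
    · simp only [Pi.add_apply, hf1 x, hg1 x]; ring
    · simp only [Pi.add_apply, hf2 x, hg2 x]; ring
  zero_mem' := by
    refine ⟨differentiable_const 0, fun x => ?_, fun x => ?_⟩ <;>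
      simp [Pi.zero_apply]
  smul_mem' := by
    rintro a f ⟨hf, hf1, hf2⟩
    refine ⟨hf.const_smul a, fun x => ?_, fun x => ?_⟩
    · simp only [Pi.smul_apply, smul_eq_mul, hf1 x]; ring
    · simp only [Pi.smul_apply, smul_eq_mul, hf2 x]; ring

section ThetaDev
open MeasureTheory Filter Metric
namespace ThetaAux


def ee (z : ℂ) : ℂ := Complex.exp (2 * piC * Complex.I * z)

lemma ee_add (z w : ℂ) : ee (z + w) = ee z * ee w := by
  rw [ee, ee, ee, mul_add, Complex.exp_add]

lemma ee_ne (z : ℂ) : ee z ≠ 0 := Complex.exp_ne_zero _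

lemma ee_zpow (n : ℤ) (z : ℂ) : ee ((n : ℂ) * z) = ee z ^ n := by
  rw [ee, ee, show 2 * piC * Complex.I * ((n:ℂ) * z) = (n:ℂ) * (2 * piC * Complex.I * z) by ring,
    Complex.exp_int_mul]

lemma ee_int (n : ℤ) : ee (n : ℂ) = 1 := by
  rw [ee, show 2 * piC * Complex.I * (n:ℂ) = (n:ℂ) * (2 * (Real.pi:ℂ) * Complex.I) by
    simp [piC]; ring]
  exact Complex.exp_int_mul_two_pi_mul_I n

lemma ee_norm (z : ℂ) : ‖ee z‖ = Real.exp (-(2 * Real.pi * z.im)) := by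
  rw [ee, Complex.norm_exp]
  congr 1
  simp [piC]

lemma ee_inv (z : ℂ) : (ee z)⁻¹ = Complex.exp (-(2 * piC * Complex.I * z)) := by
  rw [ee, ← Complex.exp_neg]

/-- entire differentiability of `x ↦ ee (c * x)` -/
lemma ee_diff (c : ℂ) : Differentiable ℂ fun x => ee (c * x) := by
  unfold ee
  fun_prop

lemma ee_hasDerivAt (c x : ℂ) :
    HasDerivAt (fun y => ee (c * y)) (2 * piC * Complex.I * c * ee (c * x)) x := by
  have h : HasDerivAt (fun y : ℂ => 2 * piC * Complex.I * (c * y)) (2 * piC * Complex.I * c) x := by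
    simpa [mul_assoc] using (hasDerivAt_id x).const_mul (2 * piC * Complex.I * c)
  simpa [ee, mul_comm] using h.cexp



lemma shift_integral {h : ℂ → ℂ} (hd : Differentiable ℂ h) (hper : ∀ x, h (x + 1) = h x)
    (z : ℂ) : (∫ t in (0:ℝ)..1, h (↑t + z)) = ∫ t in (0:ℝ)..1, h ↑t := by
  have hc : Continuous h := hd.continuous
  have hdc : Continuous (deriv h) := (hd.contDiff (n := 2)).continuous_deriv one_le_two
  set H : ℂ → ℂ := fun z => ∫ t in (0:ℝ)..1, h (↑t + z) with hH
  have key : ∀ z₀ : ℂ, HasDerivAt H 0 z₀ := by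
    intro z₀
    set μ : Measure ℝ := volume.restrict (Set.Ioc (0:ℝ) 1) with hμ
    have hμfin : μ (Set.univ) < ⊤ := by
      rw [hμ, Measure.restrict_apply_univ, Real.volume_Ioc]
      exact ENNReal.ofReal_lt_top
    -- compact set and bound
    set K : Set ℂ := (fun p : ℝ × ℂ => ↑p.1 + p.2) '' (Set.Icc 0 1 ×ˢ closedBall z₀ 1) with hK
    have hKcomp : IsCompact K :=
      ((isCompact_Icc).prod (isCompact_closedBall z₀ 1)).image (by fun_prop)
    obtain ⟨M, hM⟩ := hKcomp.exists_bound_of_continuousOn (hdc.continuousOn)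
    have main := hasDerivAt_integral_of_dominated_loc_of_deriv_le (μ := μ)
      (F := fun z (t : ℝ) => h (↑t + z)) (F' := fun z (t : ℝ) => deriv h (↑t + z))
      (x₀ := z₀) (bound := fun _ => M) (ball_mem_nhds z₀ one_pos)
      (Eventually.of_forall fun x => (hc.comp (by fun_prop)).aestronglyMeasurable)
      (((hc.comp (by fun_prop)).integrableOn_Ioc (μ := volume)))
      ((hdc.comp (by fun_prop)).aestronglyMeasurable)
      ?_ (integrable_const M) ?_
    · -- conclude: derivative is ∫ deriv h (t+z₀) dμ which is 0
      have h2 : HasDerivAt (fun z => ∫ t, h (↑t + z) ∂μ) (∫ t, deriv h (↑t + z₀) ∂μ) z₀ :=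
        main.2
      have e1 : ∀ z : ℂ, H z = ∫ t, h (↑t + z) ∂μ := by
        intro z
        show (∫ t in (0:ℝ)..1, h (↑t + z)) = ∫ t, h (↑t + z) ∂μ
        rw [intervalIntegral.integral_of_le zero_le_one]
      have e2 : (∫ t, deriv h (↑t + z₀) ∂μ) = 0 := by
        have : (∫ t, deriv h (↑t + z₀) ∂μ) = ∫ t in (0:ℝ)..1, deriv h (↑t + z₀) := by
          rw [intervalIntegral.integral_of_le zero_le_one]
        rw [this]
        have hder : ∀ t ∈ Set.uIcc (0:ℝ) 1,
            HasDerivAt (fun s : ℝ => h (↑s + z₀)) (deriv h (↑t + z₀)) t := by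
          intro t _
          have h1 : HasDerivAt (fun w : ℂ => h (w + z₀)) (deriv h (↑t + z₀)) ↑t := by
            simpa [Function.comp_def] using ((hd (↑t + z₀)).hasDerivAt.comp (↑t : ℂ)
              ((hasDerivAt_id (↑t : ℂ)).add_const z₀))
          exact h1.comp_ofReal
        rw [intervalIntegral.integral_eq_sub_of_hasDerivAt hder
          ((hdc.comp (by fun_prop)).intervalIntegrable 0 1)]
        have : ((1:ℝ):ℂ) + z₀ = (((0:ℝ):ℂ) + z₀) + 1 := by push_cast; ring
        rw [this, hper]
        ring
      rw [show (0:ℂ) = ∫ t, deriv h (↑t + z₀) ∂μ from e2.symm]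
      exact h2.congr_of_eventuallyEq (Eventually.of_forall fun z => e1 z)
    · -- bound
      refine (ae_restrict_iff' measurableSet_Ioc).2 (Eventually.of_forall fun t ht => ?_)
      intro x hx
      refine hM _ ⟨(t, x), ⟨⟨ht.1.le, ht.2⟩, ball_subset_closedBall hx⟩, rfl⟩
    · -- differentiability
      refine Eventually.of_forall fun t => fun x _ => ?_
      simpa [Function.comp_def] using ((hd (↑t + x)).hasDerivAt.comp x ((hasDerivAt_id x).const_add (↑t : ℂ)))
  have hconst : H z = H 0 :=
    is_const_of_deriv_eq_zero (fun x => (key x).differentiableAt)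
      (fun x => (key x).deriv) z 0
  have : H 0 = ∫ t in (0:ℝ)..1, h ↑t := by
    rw [hH]; simp
  rw [← this, ← hconst]

lemma ee_cont (c : ℂ) : Continuous fun x => ee (c * x) := by unfold ee; fun_prop

lemma piC_ne : piC ≠ 0 := by
  simp [piC, Real.pi_ne_zero]

lemma integral_ee (n : ℤ) :
    (∫ t in (0:ℝ)..1, ee ((n:ℂ) * ↑t)) = if n = 0 then 1 else 0 := by
  rcases eq_or_ne n 0 with rfl | hn
  · simp [ee]
  · rw [if_neg hn]
    set c : ℂ := 2 * piC * Complex.I * (n:ℂ) with hc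
    have hcne : c ≠ 0 := by
      simp [hc, piC_ne, Complex.I_ne_zero, Complex.ofReal_ne_zero]
      push_cast
      simp [hn]
    have hder : ∀ t ∈ Set.uIcc (0:ℝ) 1,
        HasDerivAt (fun s : ℝ => ee ((n:ℂ) * ↑s) / c) (ee ((n:ℂ) * ↑t)) t := by
      intro t _
      have h1 : HasDerivAt (fun w : ℂ => ee ((n:ℂ) * w) / c) (ee ((n:ℂ) * ↑t)) ↑t := by
        have h2 := (ee_hasDerivAt (n:ℂ) ↑t).div_const c
        rw [← hc] at h2
        rw [mul_div_cancel_left₀ _ hcne] at h2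
        exact h2
      exact h1.comp_ofReal
    rw [intervalIntegral.integral_eq_sub_of_hasDerivAt hder
      (((ee_cont (n:ℂ)).comp Complex.continuous_ofReal).intervalIntegrable 0 1)]
    have h1 : ((n:ℂ) * ((1:ℝ):ℂ)) = ((n:ℤ):ℂ) := by push_cast; ring
    have h0 : ((n:ℂ) * ((0:ℝ):ℂ)) = ((0:ℤ):ℂ) := by push_cast; ring
    rw [h1, h0, ee_int, ee_int]
    simp



lemma summable_of_ratio_tendsto_zero {f : ℕ → ℝ} (hpos : ∀ n, 0 ≤ f n) {ρ : ℕ → ℝ}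
    (hρ : Tendsto ρ atTop (nhds 0)) (hle : ∀ n, f (n + 1) ≤ ρ n * f n) : Summable f := by
  refine summable_of_ratio_norm_eventually_le (r := 1/2) (by norm_num) ?_
  have : ∀ᶠ n in atTop, ρ n ≤ 1/2 := hρ.eventually_le_const (by norm_num)
  filter_upwards [this] with n hn
  rw [Real.norm_of_nonneg (hpos _), Real.norm_of_nonneg (hpos _)]
  exact (hle n).trans (mul_le_mul_of_nonneg_right hn (hpos n))

section Series

variable (m r : ℕ) (Cc q : ℂ)

/-- quadratic exponent -/
def er (k : ℤ) : ℤ := r * k + m * ((k * (k - 1)) / 2)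

lemma er_succ (k : ℤ) : er m r (k + 1) = er m r k + ((m : ℤ) * k + r) := by
  obtain ⟨c, hc⟩ : Even (k * (k - 1)) := by
    have := Int.even_mul_succ_self (k - 1)
    simpa [sub_add_cancel, mul_comm] using this
  have h1 : k * (k - 1) = 2 * c := by rw [hc]; ring
  have h2 : (k + 1) * (k + 1 - 1) = 2 * (c + k) := by
    rw [show (k+1) * (k+1-1) = k * (k-1) + 2*k by ring, h1]; ring
  unfold er
  rw [h1, h2, Int.mul_ediv_cancel_left _ two_ne_zero, Int.mul_ediv_cancel_left _ two_ne_zero]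
  ring

def ww (k : ℤ) : ℂ := Cc ^ (-k) * q ^ (er m r k)

lemma er_zero : er m r 0 = 0 := by unfold er; simp

lemma ww_zero : ww m r Cc q 0 = 1 := by unfold ww; rw [er_zero]; simp

variable {Cc q}

lemma ww_succ (hC : Cc ≠ 0) (hq : q ≠ 0) (k : ℤ) :
    ww m r Cc q (k + 1) = Cc⁻¹ * q ^ ((m : ℤ) * k + r) * ww m r Cc q k := by
  unfold ww
  rw [er_succ, neg_add, zpow_add₀ hC, zpow_add₀ hq, zpow_neg_one]
  ring

lemma ww_pred (hC : Cc ≠ 0) (hq : q ≠ 0) (k : ℤ) :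
    ww m r Cc q (k - 1) = Cc * (q ^ ((m : ℤ) * (k - 1) + r))⁻¹ * ww m r Cc q k := by
  have h := ww_succ m r hC hq (k - 1)
  rw [sub_add_cancel] at h
  rw [h]
  have hz : q ^ ((m : ℤ) * (k - 1) + r) ≠ 0 := zpow_ne_zero _ hq
  field_simp

lemma ww_ne (hC : Cc ≠ 0) (hq : q ≠ 0) (k : ℤ) : ww m r Cc q k ≠ 0 :=
  mul_ne_zero (zpow_ne_zero _ hC) (zpow_ne_zero _ hq)

/-- the bound sequence on a strip of half-width `R` -/
def Mb (R : ℝ) (k : ℤ) : ℝ :=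
  ‖ww m r Cc q k‖ * Real.exp (2 * Real.pi * (m * (k.natAbs : ℝ) + r) * R)

lemma Mb_nonneg (R : ℝ) (k : ℤ) : 0 ≤ Mb m r (Cc := Cc) (q := q) R k :=
  mul_nonneg (norm_nonneg _) (Real.exp_pos _).le

lemma summable_Mb (hC : Cc ≠ 0) (hq : q ≠ 0) (hq1 : ‖q‖ < 1) (hm : 0 < m) (hr : r < m)
    (R : ℝ) : Summable (Mb m r (Cc := Cc) (q := q) R) := by
  have hqnn : 0 ≤ ‖q‖ := norm_nonneg q
  have hqn0 : ‖q‖ ≠ 0 := norm_ne_zero_iff.2 hq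
  have hqm1 : ‖q‖ ^ m < 1 := pow_lt_one₀ hqnn hq1 hm.ne'
  have tend : ∀ c : ℝ, Tendsto (fun n : ℕ => c * ‖q‖ ^ (m * n)) atTop (nhds 0) := by
    intro c
    have := (tendsto_pow_atTop_nhds_zero_of_lt_one (pow_nonneg hqnn m) hqm1).const_mul c
    simpa [pow_mul] using this
  apply Summable.of_nat_of_neg
  · -- positive side
    refine summable_of_ratio_tendsto_zero (fun n => Mb_nonneg m r R _)
      (ρ := fun n => (‖Cc‖⁻¹ * Real.exp (2 * Real.pi * m * R) * ‖q‖ ^ r) * ‖q‖ ^ (m * n))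
      (tend _) ?_
    intro n
    refine le_of_eq ?_
    show Mb m r (Cc := Cc) (q := q) R ((n : ℤ) + 1) = _
    unfold Mb
    rw [ww_succ m r hC hq, norm_mul, norm_mul, norm_inv, norm_zpow]
    have h1 : (((n : ℤ)) + 1).natAbs = n + 1 := by
      rw [show ((n : ℤ) + 1) = ((n + 1 : ℕ) : ℤ) by push_cast; ring, Int.natAbs_natCast]
    have h2 : ((n : ℤ)).natAbs = n := Int.natAbs_natCast n
    have hz : ‖q‖ ^ ((m : ℤ) * n + r) = ‖q‖ ^ (m * n) * ‖q‖ ^ r := by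
      rw [show ((m : ℤ) * n + r) = ((m * n + r : ℕ) : ℤ) by push_cast; ring, zpow_natCast,
        pow_add]
    rw [hz, h1, h2]
    push_cast
    rw [show 2 * Real.pi * (↑m * (↑n + 1) + ↑r) * R
        = 2 * Real.pi * (↑m * ↑n + ↑r) * R + 2 * Real.pi * ↑m * R by ring, Real.exp_add]
    ring
  · -- negative side
    refine summable_of_ratio_tendsto_zero (fun n => Mb_nonneg m r R _)
      (ρ := fun n => (‖Cc‖ * Real.exp (2 * Real.pi * m * R) * ‖q‖ ^ m * (‖q‖ ^ r)⁻¹) * ‖q‖ ^ (m * n))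
      (tend _) ?_
    intro n
    refine le_of_eq ?_
    show Mb m r (Cc := Cc) (q := q) R (-((n : ℤ) + 1)) = _
    unfold Mb
    rw [show -((n : ℤ) + 1) = -(n : ℤ) - 1 by ring, ww_pred m r hC hq,
      norm_mul, norm_mul, norm_inv, norm_zpow]
    have h1 : (-(n : ℤ) - 1).natAbs = n + 1 := by
      rw [show (-(n : ℤ) - 1) = -((n + 1 : ℕ) : ℤ) by push_cast; ring, Int.natAbs_neg,
        Int.natAbs_natCast]
    have h2 : ((-(n : ℤ))).natAbs = n := by rw [Int.natAbs_neg, Int.natAbs_natCast]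
    have hz : (‖q‖ ^ ((m : ℤ) * (-(n : ℤ) - 1) + r))⁻¹
        = ‖q‖ ^ (m * n) * ‖q‖ ^ m * (‖q‖ ^ r)⁻¹ := by
      rw [← zpow_neg, show -((m : ℤ) * (-(n : ℤ) - 1) + r)
          = ((m * n : ℕ) : ℤ) + ((m : ℕ) : ℤ) + (-(r : ℤ)) by push_cast; ring,
        zpow_add₀ hqn0, zpow_add₀ hqn0, zpow_natCast, zpow_natCast, zpow_neg, zpow_natCast]
    rw [hz, h1, h2]
    push_cast
    rw [show 2 * Real.pi * (↑m * (↑n + 1) + ↑r) * R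
        = 2 * Real.pi * (↑m * ↑n + ↑r) * R + 2 * Real.pi * ↑m * R by ring, Real.exp_add]
    ring

end Series
section SeriesFun

variable (m r : ℕ) (Cc τ : ℂ)

def term (k : ℤ) (x : ℂ) : ℂ :=
  ww m r Cc (ee τ) k * ee (((((m : ℤ) * k + (r : ℤ)) : ℤ) : ℂ) * x)

def gr (x : ℂ) : ℂ := ∑' k : ℤ, term m r Cc τ k x

lemma norm_q_lt_one (hτ : 0 < τ.im) : ‖ee τ‖ < 1 := by
  rw [ee_norm]
  apply Real.exp_lt_one_iff.2
  have := Real.pi_pos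
  nlinarith

lemma term_bound (R : ℝ) (k : ℤ) (x : ℂ) (hx : |x.im| ≤ R) :
    ‖term m r Cc τ k x‖ ≤ Mb m r (Cc := Cc) (q := ee τ) R k := by
  have hR : 0 ≤ R := (abs_nonneg _).trans hx
  rw [term, Mb, norm_mul]
  apply mul_le_mul_of_nonneg_left _ (norm_nonneg _)
  rw [ee_norm]
  apply Real.exp_le_exp.2
  set n : ℤ := (m : ℤ) * k + r with hn
  have him : (((n : ℤ) : ℂ) * x).im = (n : ℝ) * x.im := by
    simp [Complex.mul_im]
  rw [him]
  have habs : |(n : ℝ)| ≤ (m : ℝ) * (k.natAbs : ℝ) + r := by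
    rw [Nat.cast_natAbs, Int.cast_abs]
    have h1 : ((n : ℤ) : ℝ) = (m : ℝ) * ((k : ℤ) : ℝ) + (r : ℝ) := by rw [hn]; push_cast; ring
    rw [h1]
    have h2 := abs_add_le ((m : ℝ) * ((k : ℤ) : ℝ)) (r : ℝ)
    rw [abs_mul, _root_.abs_of_nonneg (by positivity : (0:ℝ) ≤ (m : ℝ)),
      _root_.abs_of_nonneg (by positivity : (0:ℝ) ≤ (r : ℝ))] at h2
    exact h2
  have h1 : -((n : ℝ) * x.im) ≤ |(n : ℝ)| * |x.im| := by
    rw [← abs_mul]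
    exact neg_le_abs _
  have h2 : |(n : ℝ)| * |x.im| ≤ ((m : ℝ) * (k.natAbs : ℝ) + r) * R :=
    mul_le_mul habs hx (abs_nonneg _) (by positivity)
  have hπ : (0:ℝ) ≤ 2 * Real.pi := by positivity
  calc -(2 * Real.pi * ((n:ℝ) * x.im)) = 2 * Real.pi * (-((n:ℝ) * x.im)) := by ring
    _ ≤ 2 * Real.pi * (((m : ℝ) * (k.natAbs : ℝ) + r) * R) :=
        mul_le_mul_of_nonneg_left (h1.trans h2) hπ
    _ = 2 * Real.pi * ((m : ℝ) * (k.natAbs : ℝ) + r) * R := by ring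

lemma term_diff (k : ℤ) : Differentiable ℂ (term m r Cc τ k) :=
  (ee_diff _).const_mul _

variable {Cc τ} (hC : Cc ≠ 0) (hτ : 0 < τ.im) (hm : 0 < m) (hr : r < m)
include hC hτ hm hr

lemma summable_term (x : ℂ) : Summable fun k => term m r Cc τ k x :=
  Summable.of_norm_bounded (summable_Mb m r hC (ee_ne τ) (norm_q_lt_one τ hτ) hm hr |x.im|)
    (fun k => term_bound m r Cc τ _ k x le_rfl)

lemma gr_diff : Differentiable ℂ (gr m r Cc τ) := by
  intro x₀
  set R : ℝ := |x₀.im| + 1 with hR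
  set S : Set ℂ := Complex.im ⁻¹' Set.Ioo (-R) R with hS
  have hSopen : IsOpen S := isOpen_Ioo.preimage Complex.continuous_im
  have hx₀ : x₀ ∈ S := by
    simp only [hS, Set.mem_preimage, Set.mem_Ioo, hR]
    constructor
    · linarith [neg_abs_le x₀.im]
    · linarith [le_abs_self x₀.im]
  have hUnif : TendstoUniformlyOn (fun (s : Finset ℤ) x => ∑ k ∈ s, term m r Cc τ k x)
      (gr m r Cc τ) atTop S :=
    tendstoUniformlyOn_tsum (summable_Mb m r hC (ee_ne τ) (norm_q_lt_one τ hτ) hm hr R)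
      (fun k x hx => term_bound m r Cc τ R k x
        (by
          simp only [hS, Set.mem_preimage, Set.mem_Ioo] at hx
          exact (abs_lt.2 hx).le))
  have hdiff : DifferentiableOn ℂ (gr m r Cc τ) S :=
    hUnif.tendstoLocallyUniformlyOn.differentiableOn
      (Eventually.of_forall fun s =>
        (Differentiable.fun_sum fun k _ => term_diff m r Cc τ k).differentiableOn)
      hSopen
  exact (hdiff.differentiableAt (hSopen.mem_nhds hx₀))

omit hC hτ hm hr in
lemma gr_per (x : ℂ) : gr m r Cc τ (x + 1) = gr m r Cc τ x := by
  refine tsum_congr fun k => ?_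
  unfold term
  set n : ℤ := (m : ℤ) * k + r
  have : ((n : ℤ) : ℂ) * (x + 1) = ((n : ℤ) : ℂ) * x + ((n : ℤ) : ℂ) := by ring
  rw [this, ee_add, ee_int, mul_one]

omit hτ hm hr in
lemma gr_tau (x : ℂ) :
    gr m r Cc τ (x + τ) = Cc * (ee ((m : ℂ) * x))⁻¹ * gr m r Cc τ x := by
  have hq : ee τ ≠ 0 := ee_ne τ
  have h1 : ∀ k : ℤ, term m r Cc τ k (x + τ)
      = Cc * (ee ((m : ℂ) * x))⁻¹ * term m r Cc τ (k + 1) x := by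
    intro k
    unfold term
    set n : ℤ := (m : ℤ) * k + r with hn
    have e1 : ((n : ℤ) : ℂ) * (x + τ) = (n : ℂ) * x + (n : ℂ) * τ := by ring
    rw [e1, ee_add, show ee ((n : ℂ) * τ) = ee τ ^ n from ee_zpow n τ, ww_succ m r hC hq k]
    have e2 : ((((m : ℤ) * (k + 1) + (r : ℤ)) : ℤ) : ℂ) * x = ((n : ℤ) : ℂ) * x + (m : ℂ) * x := by
      push_cast [hn]; ring
    rw [e2, ee_add]
    have hene : ee ((m : ℂ) * x) ≠ 0 := ee_ne _
    field_simp
    have hene' : ee (x * (m : ℂ)) ≠ 0 := ee_ne _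
    rw [← hn, mul_right_comm _ (ee (x * ↑m)), mul_div_cancel_right₀ _ hene']
  rw [gr, tsum_congr h1, tsum_mul_left]
  congr 1
  have := (Equiv.addRight (1 : ℤ)).tsum_eq (f := fun k => term m r Cc τ k x)
  simpa [Equiv.coe_addRight, gr] using this

omit hC hτ hm hr in
lemma term_contR (k : ℤ) (c : ℂ) : Continuous fun t : ℝ => ee (c * ↑t) * term m r Cc τ k ↑t := by
  unfold term ee
  fun_prop

lemma gr_coef (s : ℕ) (hs : s < m) :
    (∫ t in (0:ℝ)..1, ee (((-(s : ℤ) : ℤ) : ℂ) * ↑t) * gr m r Cc τ ↑t)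
      = if r = s then 1 else 0 := by
  have hq : ee τ ≠ 0 := ee_ne τ
  have hsummb := summable_Mb m r hC hq (norm_q_lt_one τ hτ) hm hr 0
  set F : ℤ → ℝ → ℂ := fun k t => ee (((-(s : ℤ) : ℤ) : ℂ) * ↑t) * term m r Cc τ k ↑t with hF
  have hFbound : ∀ k t, ‖F k t‖ ≤ Mb m r (Cc := Cc) (q := ee τ) 0 k := by
    intro k t
    rw [hF]
    simp only
    rw [norm_mul, ee_norm]
    have h0 : ((((-(s : ℤ)) : ℤ) : ℂ) * (t : ℂ)).im = 0 := by
      simp [Complex.mul_im]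
    rw [h0]
    simp only [mul_zero, neg_zero, Real.exp_zero, one_mul]
    exact term_bound m r Cc τ 0 k _ (by simp)
  have hFint : ∀ k, IntegrableOn (F k) (Set.Ioc (0:ℝ) 1) volume := fun k =>
    (term_contR m r k _).integrableOn_Ioc
  have hswap : (∫ t in (0:ℝ)..1, ee (((-(s : ℤ) : ℤ) : ℂ) * ↑t) * gr m r Cc τ ↑t)
      = ∑' k : ℤ, ∫ t in (0:ℝ)..1, F k t := by
    have hpt : ∀ t : ℝ, ee (((-(s : ℤ) : ℤ) : ℂ) * ↑t) * gr m r Cc τ ↑t = ∑' k : ℤ, F k t := by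
      intro t
      rw [gr, ← tsum_mul_left]
    rw [intervalIntegral.integral_of_le zero_le_one]
    simp_rw [hpt]
    have hsum2 : Summable fun k => ∫ t in Set.Ioc (0:ℝ) 1, ‖F k t‖ := by
      refine Summable.of_nonneg_of_le (fun k => integral_nonneg fun t => norm_nonneg _)
        (fun k => ?_) hsummb
      calc (∫ t in Set.Ioc (0:ℝ) 1, ‖F k t‖)
          ≤ ∫ _t in Set.Ioc (0:ℝ) 1, Mb m r (Cc := Cc) (q := ee τ) 0 k := by
            refine integral_mono_of_nonneg (Eventually.of_forall fun t => norm_nonneg _)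
              (integrable_const _) (Eventually.of_forall fun t => hFbound k t)
        _ = Mb m r (Cc := Cc) (q := ee τ) 0 k := by
            rw [setIntegral_const, Real.volume_real_Ioc]
            norm_num
    have hT := integral_tsum_of_summable_integral_norm (μ := volume.restrict (Set.Ioc (0:ℝ) 1))
      (F := F) hFint hsum2
    rw [← hT]
    congr 1
    funext k
    rw [intervalIntegral.integral_of_le zero_le_one]
  rw [hswap]
  have hval : ∀ k : ℤ, (∫ t in (0:ℝ)..1, F k t)
      = ww m r Cc (ee τ) k * (if ((m : ℤ) * k + (r : ℤ)) - (s : ℤ) = 0 then 1 else 0) := by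
    intro k
    have hintegrand : ∀ t : ℝ, F k t
        = ww m r Cc (ee τ) k * ee ((((((m : ℤ) * k + (r : ℤ)) - (s : ℤ)) : ℤ) : ℂ) * ↑t) := by
      intro t
      rw [hF]
      simp only
      rw [term]
      have : (((((m : ℤ) * k + (r : ℤ)) - (s : ℤ)) : ℤ) : ℂ) * (t : ℂ)
          = ((-(s : ℤ) : ℤ) : ℂ) * ↑t + ((((m : ℤ) * k + (r : ℤ)) : ℤ) : ℂ) * ↑t := by
        push_cast; ring
      rw [this, ee_add]
      ring
    simp_rw [hintegrand]
    rw [intervalIntegral.integral_const_mul, integral_ee]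
  simp_rw [hval]
  rw [tsum_eq_single 0 ?_]
  · rw [ww_zero]
    have : ((m : ℤ) * 0 + (r : ℤ)) - (s : ℤ) = (r : ℤ) - s := by ring
    rw [this]
    by_cases h : r = s
    · simp [h]
    · have : (r : ℤ) - s ≠ 0 := by
        intro hc
        exact h (by omega)
      simp [this, h]
  · intro k hk
    have : ((m : ℤ) * k + (r : ℤ)) - (s : ℤ) ≠ 0 := by
      intro hc
      rcases hk.lt_or_gt with h | h
      · have hk1 : k ≤ -1 := by omega
        have : (m : ℤ) * k ≤ (m : ℤ) * (-1) := by
          apply mul_le_mul_of_nonneg_left hk1 (by positivity)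
        omega
      · have hk1 : 1 ≤ k := by omega
        have : (m : ℤ) * 1 ≤ (m : ℤ) * k := by
          apply mul_le_mul_of_nonneg_left hk1 (by positivity)
        omega
    simp [this]

end SeriesFun
section Main

variable (τ : ℂ) (m : ℕ) (A B : ℂ)

def alpha : ℂ := Complex.log (A * (-1) ^ m) / (2 * piC * Complex.I)

def CC : ℂ := B * (-1) ^ m * Complex.exp (-(piC * Complex.I * m * τ)) * (ee (alpha m A * τ))⁻¹

def gC (f : ℂ → ℂ) (x : ℂ) : ℂ :=
  Complex.exp (-(2 * piC * Complex.I * alpha m A * x)) * f x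

def coef (f : ℂ → ℂ) (n : ℤ) : ℂ :=
  ∫ t in (0:ℝ)..1, ee (((-n : ℤ) : ℂ) * ↑t) * gC m A f ↑t

lemma two_piC_I_ne : 2 * piC * Complex.I ≠ 0 := by
  simp [piC_ne, Complex.I_ne_zero]

lemma ee_mul_inv (u v : ℂ) : ee u * (ee v)⁻¹ = ee (u - v) := by
  have h := ee_add (u - v) v
  rw [sub_add_cancel] at h
  rw [h]
  field_simp [ee_ne]

variable {A B}

lemma hA1 (hA : A ≠ 0) : A * (-1) ^ m ≠ 0 :=
  mul_ne_zero hA (pow_ne_zero _ (by norm_num))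

lemma ee_alpha (hA : A ≠ 0) : ee (alpha m A) = A * (-1) ^ m := by
  rw [ee, alpha, mul_comm (2 * piC * Complex.I), div_mul_cancel₀ _ two_piC_I_ne,
    Complex.exp_log (hA1 m hA)]

lemma CC_ne (hA : A ≠ 0) (hB : B ≠ 0) : CC τ m A B ≠ 0 := by
  refine mul_ne_zero (mul_ne_zero (mul_ne_zero hB (pow_ne_zero _ (by norm_num)))
    (Complex.exp_ne_zero _)) (inv_ne_zero (ee_ne _))

variable {f : ℂ → ℂ}

omit τ in
lemma gC_diff (hd : Differentiable ℂ f) : Differentiable ℂ (gC m A f) := by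
  unfold gC
  exact (Complex.differentiable_exp.comp (by fun_prop)).mul hd

omit τ in
lemma gC_per (hA : A ≠ 0) (h1 : ∀ x : ℂ, f (x + 1) = A * (-1) ^ m * f x) (x : ℂ) :
    gC m A f (x + 1) = gC m A f x := by
  unfold gC
  rw [h1]
  have hexp : Complex.exp (-(2 * piC * Complex.I * alpha m A * (x + 1)))
      = Complex.exp (-(2 * piC * Complex.I * alpha m A * x)) * (ee (alpha m A))⁻¹ := by
    rw [ee_inv, ← Complex.exp_add]
    congr 1
    ring
  rw [hexp, ee_alpha m hA]
  field_simp [hA1 m hA]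

lemma gC_tau (h2 : ∀ x : ℂ, f (x + τ)
      = B * (-1) ^ m *
          Complex.exp (-(piC * Complex.I * m * τ) - 2 * piC * Complex.I * m * x) * f x)
    (x : ℂ) :
    gC m A f (x + τ) = CC τ m A B * (ee ((m : ℂ) * x))⁻¹ * gC m A f x := by
  have e1 : gC m A f (x + τ)
      = B * (-1) ^ m * Complex.exp (-(2 * piC * Complex.I * alpha m A * (x + τ))
          + (-(piC * Complex.I * m * τ) - 2 * piC * Complex.I * m * x)) * f x := by
    unfold gC
    rw [h2, Complex.exp_add]
    ring
  have e2 : CC τ m A B * (ee ((m : ℂ) * x))⁻¹ * gC m A f x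
      = B * (-1) ^ m * Complex.exp ((-(piC * Complex.I * m * τ)
          + -(2 * piC * Complex.I * (alpha m A * τ))) + (-(2 * piC * Complex.I * ((m : ℂ) * x))
          + -(2 * piC * Complex.I * alpha m A * x))) * f x := by
    unfold CC gC
    rw [ee_inv, ee_inv, Complex.exp_add, Complex.exp_add, Complex.exp_add]
    ring
  rw [e1, e2]
  congr 3
  ring

lemma coef_rec (hd : Differentiable ℂ f)
    (h1 : ∀ x : ℂ, f (x + 1) = A * (-1) ^ m * f x)
    (h2 : ∀ x : ℂ, f (x + τ)
      = B * (-1) ^ m *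
          Complex.exp (-(piC * Complex.I * m * τ) - 2 * piC * Complex.I * m * x) * f x)
    (hA : A ≠ 0) (n : ℤ) :
    coef m A f n = CC τ m A B * (ee τ) ^ (-n) * coef m A f (n + m) := by
  have hgd : Differentiable ℂ fun x => ee (((-n : ℤ) : ℂ) * x) * gC m A f x :=
    (ee_diff _).mul (gC_diff m hd)
  have hper : ∀ x : ℂ, ee (((-n : ℤ) : ℂ) * (x + 1)) * gC m A f (x + 1)
      = ee (((-n : ℤ) : ℂ) * x) * gC m A f x := by
    intro x
    have a1 : ((-n : ℤ) : ℂ) * (x + 1) = ((-n : ℤ) : ℂ) * x + ((-n : ℤ) : ℂ) := by ring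
    rw [a1, ee_add, ee_int, mul_one, gC_per m hA h1]
  have hshift := shift_integral hgd hper τ
  have hint : ∀ t : ℝ, ee (((-n : ℤ) : ℂ) * (↑t + τ)) * gC m A f (↑t + τ)
      = CC τ m A B * (ee τ) ^ (-n) * (ee (((-(n + m) : ℤ) : ℂ) * ↑t) * gC m A f ↑t) := by
    intro t
    rw [gC_tau τ m h2]
    have a1 : ((-n : ℤ) : ℂ) * (↑t + τ) = ((-n : ℤ) : ℂ) * ↑t + ((-n : ℤ) : ℂ) * τ := by ring
    rw [a1, ee_add, show ee (((-n : ℤ) : ℂ) * τ) = ee τ ^ (-n) from ee_zpow (-n) τ]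
    have a2 : ee (((-(n + m) : ℤ) : ℂ) * ↑t)
        = ee (((-n : ℤ) : ℂ) * ↑t) * (ee ((m : ℂ) * ↑t))⁻¹ := by
      rw [ee_mul_inv]
      congr 1
      push_cast
      ring
    rw [a2]
    ring
  have hL : (∫ t in (0:ℝ)..1, ee (((-n : ℤ) : ℂ) * (↑t + τ)) * gC m A f (↑t + τ))
      = CC τ m A B * (ee τ) ^ (-n) * coef m A f (n + m) := by
    have : ∀ t : ℝ, ee (((-n : ℤ) : ℂ) * (↑t + τ)) * gC m A f (↑t + τ)
        = CC τ m A B * (ee τ) ^ (-n) * (ee (((-(n + m) : ℤ) : ℂ) * ↑t) * gC m A f ↑t) := hint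
    simp_rw [this]
    rw [intervalIntegral.integral_const_mul]
    rfl
  -- shift_integral applied to h := fun x => ee((-n)x) * gC f x gives
  -- ∫ h(t+τ) = ∫ h(t) = coef n
  rw [coef, ← hshift, hL]

lemma coef_vanish (hd : Differentiable ℂ f)
    (h1 : ∀ x : ℂ, f (x + 1) = A * (-1) ^ m * f x)
    (h2 : ∀ x : ℂ, f (x + τ)
      = B * (-1) ^ m *
          Complex.exp (-(piC * Complex.I * m * τ) - 2 * piC * Complex.I * m * x) * f x)
    (hA : A ≠ 0) (hB : B ≠ 0) (hm : 0 < m)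
    (hsmall : ∀ s : ℕ, s < m → coef m A f (s : ℤ) = 0) (n : ℤ) : coef m A f n = 0 := by
  have step : ∀ k : ℤ, coef m A f k = CC τ m A B * (ee τ) ^ (-k) * coef m A f (k + m) :=
    coef_rec τ m hd h1 h2 hA
  have hcne : ∀ k : ℤ, CC τ m A B * (ee τ) ^ (-k) ≠ 0 :=
    fun k => mul_ne_zero (CC_ne τ m hA hB) (zpow_ne_zero _ (ee_ne τ))
  have stepup : ∀ k : ℤ, coef m A f k = 0 → coef m A f (k + m) = 0 := by
    intro k h
    have hs := step k
    rw [h] at hs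
    rcases mul_eq_zero.1 hs.symm with h' | h'
    · exact absurd h' (hcne k)
    · exact h'
  have stepdown : ∀ k : ℤ, coef m A f (k + m) = 0 → coef m A f k = 0 := by
    intro k h
    rw [step k, h, mul_zero]
  have claim : ∀ k : ℤ, ∀ s : ℕ, s < m → coef m A f (k * m + s) = 0 := by
    intro k
    induction k using Int.induction_on with
    | zero => intro s hs; simpa using hsmall s hs
    | succ k ih =>
        intro s hs
        have h := stepup ((k : ℤ) * m + s) (ih s hs)
        rw [show ((k : ℤ) * m + s) + m = ((k : ℤ) + 1) * m + s by ring] at h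
        exact h
    | pred k ih =>
        intro s hs
        apply stepdown
        rw [show (-(k : ℤ) - 1) * m + s + m = -(k : ℤ) * m + s by ring]
        exact ih s hs
  have h2' : 0 ≤ n % m := Int.emod_nonneg n (by exact_mod_cast hm.ne')
  have h3 : n % m < m := Int.emod_lt_of_pos n (by exact_mod_cast hm)
  have hn : n = (n / m) * m + ((n % m).toNat : ℤ) := by
    rw [Int.toNat_of_nonneg h2']
    have := Int.mul_ediv_add_emod n m
    linarith
  rw [hn]
  exact claim (n / m) (n % m).toNat (by omega)


lemma fzero (hd : Differentiable ℂ f)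
    (h1 : ∀ x : ℂ, f (x + 1) = A * (-1) ^ m * f x) (hA : A ≠ 0)
    (hz : ∀ n : ℤ, coef m A f n = 0) : f = 0 := by
  classical
  set G : ℝ → ℂ := fun t => gC m A f ↑t with hG
  have hGc : Continuous G := (gC_diff m hd).continuous.comp Complex.continuous_ofReal
  haveI : Fact (0 < (1:ℝ)) := ⟨one_pos⟩
  have hker : Continuous (AddCircle.liftIco (1:ℝ) 0 G) := by
    apply AddCircle.liftIco_continuous
    · have h := gC_per m hA h1 (0:ℂ)
      norm_num at h
      simp only [hG]
      norm_num [h]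
    · exact hGc.continuousOn
  set Gc : C(AddCircle (1:ℝ), ℂ) := ⟨AddCircle.liftIco (1:ℝ) 0 G, hker⟩ with hGcdef
  have hGcoe : ∀ t : ℝ, t ∈ Set.Ico (0:ℝ) 1 → Gc ↑t = G t := by
    intro t ht
    show AddCircle.liftIco (1:ℝ) 0 G ↑t = G t
    exact AddCircle.liftIco_coe_apply (by rwa [zero_add])
  have hfc : ∀ n : ℤ, fourierCoeff (⇑Gc) n = coef m A f n := by
    intro n
    rw [fourierCoeff_eq_intervalIntegral _ n 0]
    rw [show ((1:ℝ)/(1:ℝ)) = 1 by norm_num, one_smul, zero_add, coef]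
    apply intervalIntegral.integral_congr_ae
    have hae : ∀ᵐ x : ℝ, x ≠ 1 :=
      MeasureTheory.compl_mem_ae_iff.2 Real.volume_singleton
    filter_upwards [hae] with x hx hxI
    rw [Set.uIoc_of_le zero_le_one] at hxI
    have hxIco : x ∈ Set.Ico (0:ℝ) 1 := ⟨hxI.1.le, lt_of_le_of_ne hxI.2 hx⟩
    rw [fourier_coe_apply, smul_eq_mul, hGcoe x hxIco]
    show Complex.exp (2 * ↑Real.pi * Complex.I * ↑(-n) * ↑x / ↑(1:ℝ)) * gC m A f ↑x
      = ee (((-n : ℤ) : ℂ) * ↑x) * gC m A f ↑x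
    congr 1
    rw [ee]
    congr 1
    push_cast [piC]
    ring
  have hsumm : Summable fun n : ℤ => fourierCoeff (⇑Gc) n := by
    have : (fun n : ℤ => fourierCoeff (⇑Gc) n) = fun _ => 0 := funext fun n => by
      rw [hfc, hz]
    rw [this]
    exact summable_zero
  have hhs := hasSum_fourier_series_of_summable hsumm
  have hzero' : (fun i : ℤ => fourierCoeff (⇑Gc) i • fourier i)
      = fun _ : ℤ => (0 : C(AddCircle (1:ℝ), ℂ)) := funext fun i => by
    rw [hfc, hz, zero_smul]
  rw [hzero'] at hhs
  have hGc0 : Gc = 0 := (hhs.unique hasSum_zero)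
  have hGzero : ∀ t : ℝ, t ∈ Set.Ico (0:ℝ) 1 → G t = 0 := by
    intro t ht
    rw [← hGcoe t ht, hGc0]
    rfl
  -- identity theorem
  have hana : AnalyticOnNhd ℂ (gC m A f) Set.univ :=
    (gC_diff m hd).differentiableOn.analyticOnNhd isOpen_univ
  have htend0 : Filter.Tendsto (fun n : ℕ => (1 / ((n:ℝ) + 4))) Filter.atTop (nhds 0) := by
    have ha : Filter.Tendsto (fun n : ℕ => ((n:ℝ) + 4)) Filter.atTop Filter.atTop :=
      Filter.tendsto_atTop_add_const_right _ 4 tendsto_natCast_atTop_atTop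
    simpa [Function.comp_def, one_div] using tendsto_inv_atTop_zero.comp ha
  have htendR : Filter.Tendsto (fun n : ℕ => ((1/2 + 1 / ((n:ℝ) + 4) : ℝ) : ℂ)) Filter.atTop
      (nhds ((1/2 : ℝ) : ℂ)) := by
    apply (Complex.continuous_ofReal.tendsto _).comp
    have := tendsto_const_nhds (x := (1/2:ℝ)) (f := Filter.atTop (α := ℕ)) |>.add htend0
    simpa using this
  have hmemIco : ∀ n : ℕ, (1/2 + 1 / ((n:ℝ) + 4)) ∈ Set.Ico (0:ℝ) 1 := by
    intro n
    constructor
    · positivity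
    · have h4 : (4:ℝ) ≤ (n:ℝ) + 4 := by
        have : (0:ℝ) ≤ (n:ℝ) := Nat.cast_nonneg n
        linarith
      have : 1 / ((n:ℝ) + 4) ≤ 1/4 := by
        apply one_div_le_one_div_of_le (by norm_num) h4
      linarith
  have hne : ∀ n : ℕ, ((1/2 + 1 / ((n:ℝ) + 4) : ℝ) : ℂ) ≠ ((1/2 : ℝ) : ℂ) := by
    intro n
    rw [Ne, Complex.ofReal_inj]
    have : 0 < 1 / ((n:ℝ) + 4) := by positivity
    intro h
    linarith
  have htendW : Filter.Tendsto (fun n : ℕ => ((1/2 + 1 / ((n:ℝ) + 4) : ℝ) : ℂ)) Filter.atTop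
      (nhdsWithin ((1/2 : ℝ) : ℂ) {((1/2 : ℝ) : ℂ)}ᶜ) := by
    apply tendsto_nhdsWithin_of_tendsto_nhds_of_eventually_within _ htendR
    exact Filter.Eventually.of_forall fun n => hne n
  have hfreq : ∃ᶠ z in nhdsWithin ((1/2 : ℝ) : ℂ) {((1/2 : ℝ) : ℂ)}ᶜ, gC m A f z = 0 :=
    htendW.frequently (Filter.Frequently.of_forall fun n => hGzero _ (hmemIco n))
  have heq := hana.eqOn_zero_of_preconnected_of_frequently_eq_zero isPreconnected_univ
    (Set.mem_univ (((1/2 : ℝ) : ℂ))) hfreq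
  funext x
  have hx := heq (Set.mem_univ x)
  rw [gC] at hx
  simp only [Pi.zero_apply] at hx ⊢
  rcases mul_eq_zero.1 hx with h | h
  · exact absurd h (Complex.exp_ne_zero _)
  · exact h


omit B in
lemma coef_add {f g : ℂ → ℂ} (hf : Continuous f) (hg : Continuous g) (n : ℤ) :
    coef m A (f + g) n = coef m A f n + coef m A g n := by
  unfold coef gC
  rw [← intervalIntegral.integral_add
    ((Continuous.intervalIntegrable (by unfold ee; fun_prop) 0 1))
    ((Continuous.intervalIntegrable (by unfold ee; fun_prop) 0 1))]
  congr 1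
  funext t
  simp only [Pi.add_apply]
  ring

omit B in
lemma coef_smul {f : ℂ → ℂ} (c : ℂ) (n : ℤ) :
    coef m A (c • f) n = c * coef m A f n := by
  unfold coef gC
  rw [← intervalIntegral.integral_const_mul]
  congr 1
  funext t
  simp only [Pi.smul_apply, smul_eq_mul]
  ring

variable (r : ℕ)

def Fr (x : ℂ) : ℂ := ee (alpha m A * x) * gr m r (CC τ m A B) τ x

lemma Fr_diff (hA : A ≠ 0) (hB : B ≠ 0) (hτ : 0 < τ.im) (hm : 0 < m) (hr : r < m) :
    Differentiable ℂ (Fr τ m (A := A) (B := B) r) :=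
  (ee_diff (alpha m A)).mul (gr_diff m r (CC_ne τ m hA hB) hτ hm hr)

lemma Fr_one (hA : A ≠ 0) (x : ℂ) :
    Fr τ m (A := A) (B := B) r (x + 1) = A * (-1) ^ m * Fr τ m (A := A) (B := B) r x := by
  unfold Fr
  rw [gr_per, show alpha m A * (x + 1) = alpha m A * x + alpha m A by ring, ee_add,
    ee_alpha m hA]
  ring

lemma Fr_tau (hA : A ≠ 0) (hB : B ≠ 0) (x : ℂ) :
    Fr τ m (A := A) (B := B) r (x + τ)
      = B * (-1) ^ m *
          Complex.exp (-(piC * Complex.I * m * τ) - 2 * piC * Complex.I * m * x)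
          * Fr τ m (A := A) (B := B) r x := by
  unfold Fr
  rw [gr_tau m r (CC_ne τ m hA hB) x,
    show alpha m A * (x + τ) = alpha m A * x + alpha m A * τ by ring, ee_add]
  unfold CC
  rw [ee_inv ((m : ℂ) * x),
    show (-(piC * Complex.I * (m : ℂ) * τ) - 2 * piC * Complex.I * (m : ℂ) * x)
      = -(piC * Complex.I * (m : ℂ) * τ) + -(2 * piC * Complex.I * ((m : ℂ) * x)) by ring,
    Complex.exp_add]
  field_simp [ee_ne]

lemma Fr_gC : gC m A (Fr τ m (A := A) (B := B) r) = gr m r (CC τ m A B) τ := by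
  funext x
  unfold gC Fr
  rw [ee, ← mul_assoc, ← Complex.exp_add,
    show -(2 * piC * Complex.I * alpha m A * x) + 2 * piC * Complex.I * (alpha m A * x) = 0
      by ring, Complex.exp_zero, one_mul]

lemma Fr_coef (hA : A ≠ 0) (hB : B ≠ 0) (hτ : 0 < τ.im) (hm : 0 < m) (hr : r < m)
    (s : ℕ) (hs : s < m) :
    coef m A (Fr τ m (A := A) (B := B) r) (s : ℤ) = if r = s then 1 else 0 := by
  rw [coef, Fr_gC]
  exact gr_coef m r (CC_ne τ m hA hB) hτ hm hr s hs

end Main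
end ThetaAux
end ThetaDev

/-- `T_{m,A,B}` has complex dimension exactly `m`. -/
theorem finrank_TSpace (τ : ℂ) (hτ : 0 < τ.im) (m : ℕ) (hm : 0 < m)
    (A B : ℂ) (hA : A ≠ 0) (hB : B ≠ 0) :
    Module.finrank ℂ (TSpace τ m A B) = m := by
  classical
  open ThetaAux in
  -- the Fourier-coefficient linear map
  have hmem : ∀ f : ℂ → ℂ, f ∈ TSpace τ m A B →
      Differentiable ℂ f ∧ IsThetaPoly τ m A B f := fun f hf => hf
  let Φ : (TSpace τ m A B) →ₗ[ℂ] (Fin m → ℂ) :=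
    { toFun := fun f i => ThetaAux.coef m A (f : ℂ → ℂ) (i : ℤ)
      map_add' := by
        intro f g
        funext i
        obtain ⟨hdf, -⟩ := hmem _ f.2
        obtain ⟨hdg, -⟩ := hmem _ g.2
        have hco : ((f + g : TSpace τ m A B) : ℂ → ℂ) = (f : ℂ → ℂ) + (g : ℂ → ℂ) := rfl
        show ThetaAux.coef m A ((f + g : TSpace τ m A B) : ℂ → ℂ) (i : ℤ) = _
        rw [hco, ThetaAux.coef_add m hdf.continuous hdg.continuous]
        rfl
      map_smul' := by
        intro c f
        funext i
        have hco : ((c • f : TSpace τ m A B) : ℂ → ℂ) = c • (f : ℂ → ℂ) := rfl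
        show ThetaAux.coef m A ((c • f : TSpace τ m A B) : ℂ → ℂ) (i : ℤ) = _
        rw [hco, ThetaAux.coef_smul m c]
        rfl }
  have hΦapp : ∀ (u : TSpace τ m A B) (j : Fin m),
      Φ u j = ThetaAux.coef m A (u : ℂ → ℂ) ((j : ℕ) : ℤ) := fun u j => rfl
  have hinj : Function.Injective Φ := by
    rw [injective_iff_map_eq_zero]
    intro u hu
    obtain ⟨hdu, hu1, hu2⟩ := hmem _ u.2
    have hsmall : ∀ s : ℕ, s < m → ThetaAux.coef m A (u : ℂ → ℂ) (s : ℤ) = 0 := by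
      intro s hs
      have h := congrFun hu ⟨s, hs⟩
      simpa [hΦapp] using h
    have hall := ThetaAux.coef_vanish τ m hdu hu1 hu2 hA hB hm hsmall
    have hz : (u : ℂ → ℂ) = 0 := ThetaAux.fzero m hdu hu1 hA hall
    exact Subtype.ext hz
  have hFr_mem : ∀ i : Fin m, ThetaAux.Fr τ m (A := A) (B := B) i ∈ TSpace τ m A B :=
    fun i => ⟨ThetaAux.Fr_diff τ m i hA hB hτ hm i.2,
      fun x => ThetaAux.Fr_one τ m i hA x, fun x => ThetaAux.Fr_tau τ m i hA hB x⟩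
  have hΦFr : ∀ i : Fin m, Φ ⟨ThetaAux.Fr τ m (A := A) (B := B) i, hFr_mem i⟩
      = Pi.single i 1 := by
    intro i
    funext j
    rw [hΦapp, ThetaAux.Fr_coef τ m i hA hB hτ hm i.2 j j.2, Pi.single_apply]
    by_cases h : (i : ℕ) = (j : ℕ)
    · rw [if_pos h, if_pos (Fin.ext h.symm)]
    · rw [if_neg h, if_neg (fun hc => h (congrArg Fin.val hc.symm))]
  have hsurj : Function.Surjective Φ := by
    rw [← LinearMap.range_eq_top, eq_top_iff]
    intro v _
    have hv : v = ∑ i : Fin m, v i • (Pi.single i 1 : Fin m → ℂ) := by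
      funext j
      rw [Finset.sum_apply]
      simp only [Pi.smul_apply, Pi.single_apply, smul_eq_mul, mul_ite, mul_one, mul_zero]
      rw [Finset.sum_ite_eq Finset.univ j v]
      simp
    rw [hv]
    exact Submodule.sum_mem _ fun i _ =>
      Submodule.smul_mem _ _ (LinearMap.mem_range.2 ⟨_, hΦFr i⟩)
  have e : (TSpace τ m A B) ≃ₗ[ℂ] (Fin m → ℂ) :=
    LinearEquiv.ofBijective Φ ⟨hinj, hsurj⟩
  rw [e.finrank_eq, Module.finrank_fin_fun]


end
end
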